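/- Let x0 ∈ ℝ², r0 > 0 and let E be a relatively closed subset of B(x0,r0) such that x0 ∈ E, β_E(x0,r0) ≤ 1/32, E separates B(x0,r0), and H¹(E) ≤ (2 + 1/8) r0. Then there exists a measurable set Ξ ⊆ (r0/16, r0) with L¹((r0/16, r0) \ Ξ) ≤ r0/4 such that for all ρ ∈ Ξ, the set E ∩ ∂B(x0,ρ) consists of exactly two points whose mutual distance is larger than ρ. -/

import Mathlib

open Metric Set MeasureTheory

noncomputable section

abbrev E2 := EuclideanSpace ℝ (Fin 2)

/-- The affine line through `x` with direction `v`. -/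
def lineThrough (x v : E2) : Set E2 := {p | ∃ t : ℝ, p = x + t • v}

/-- The (unilateral) flatness `β_K(x0, r0)`: the infimum of all `ε ≥ 0` such that
`K ∩ B(x0,r0)` is contained in a strip of half-width `ε · r0` around some line through `x0`. -/
noncomputable def flatness (K : Set E2) (x0 : E2) (r0 : ℝ) : ℝ :=
  sInf {ε : ℝ | 0 ≤ ε ∧ ∃ v : E2, v ≠ 0 ∧
    ∀ y ∈ K ∩ ball x0 r0, infDist y (lineThrough x0 v) ≤ ε * r0}

/-- The bilateral flatness `β^bil_K(x0, r0)`: the infimum of all `ε ≥ 0` such that for some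
line through `x0`, `K ∩ B(x0,r0)` is `ε r0`-close to the line and conversely each point of the
line in the ball is `ε r0`-close to `K`. -/
noncomputable def bilFlatness (K : Set E2) (x0 : E2) (r0 : ℝ) : ℝ :=
  sInf {ε : ℝ | 0 ≤ ε ∧ ∃ v : E2, v ≠ 0 ∧
    (∀ y ∈ K ∩ ball x0 r0, infDist y (lineThrough x0 v) ≤ ε * r0) ∧
    (∀ y ∈ lineThrough x0 v ∩ ball x0 r0, infDist y K ≤ ε * r0)}

/-- `K` separates `B(x0,r0)`: the flatness is at most `1/2` and, for some unit normal `ν` of an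
optimal approximating line, the two regions `D^±` of points of the ball lying at (signed) distance
more than `β_K(x0,r0)·r0` from the line on each side cannot be joined by a connected subset of
`B(x0,r0) \ K`, i.e. they lie in distinct connected components of `B(x0,r0) \ K`. -/
def Separates (K : Set E2) (x0 : E2) (r0 : ℝ) : Prop :=
  flatness K x0 r0 ≤ 1 / 2 ∧
  ∃ ν : E2, ‖ν‖ = 1 ∧
    (∀ y ∈ K ∩ ball x0 r0, |(inner ℝ (y - x0) ν : ℝ)| ≤ flatness K x0 r0 * r0) ∧
    ∀ C : Set E2, IsConnected C → C ⊆ ball x0 r0 \ K →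
      ¬ ((∃ p ∈ C, flatness K x0 r0 * r0 < (inner ℝ (p - x0) ν : ℝ)) ∧
         (∃ q ∈ C, (inner ℝ (q - x0) ν : ℝ) < -(flatness K x0 r0 * r0)))

/-- `A` is relatively closed in `B`. -/
def RelClosedIn (A B : Set E2) : Prop := A ⊆ B ∧ closure A ∩ B ⊆ A

lemma measure_submodular {α : Type*} [MeasurableSpace α] (μ : Measure α) (s t : Set α) :
    μ (s ∪ t) + μ (s ∩ t) ≤ μ s + μ t := by
  calc μ (s ∪ t) + μ (s ∩ t)
      ≤ μ (toMeasurable μ s ∪ toMeasurable μ t) + μ (toMeasurable μ s ∩ toMeasurable μ t) :=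
        add_le_add
          (measure_mono (union_subset_union (subset_toMeasurable _ _) (subset_toMeasurable _ _)))
          (measure_mono (inter_subset_inter (subset_toMeasurable _ _) (subset_toMeasurable _ _)))
    _ = μ (toMeasurable μ s) + μ (toMeasurable μ t) :=
        measure_union_add_inter _ (measurableSet_toMeasurable _ _)
    _ = μ s + μ t := by rw [measure_toMeasurable, measure_toMeasurable]

lemma lemB {α ι : Type*} [MeasurableSpace α] (μ : Measure α) (s : Finset ι) (S : ι → Set α) :
    μ (⋃ i ∈ s, S i) + μ (⋃ i ∈ s, ⋃ j ∈ s, ⋃ _ : i ≠ j, S i ∩ S j) ≤ ∑ i ∈ s, μ (S i) := by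
  classical
  induction s using Finset.induction_on with
  | empty => simp
  | @insert a s ha ih =>
    have hP : (⋃ i ∈ insert a s, ⋃ j ∈ insert a s, ⋃ _ : i ≠ j, S i ∩ S j)
        ⊆ (S a ∩ ⋃ i ∈ s, S i) ∪ (⋃ i ∈ s, ⋃ j ∈ s, ⋃ _ : i ≠ j, S i ∩ S j) := by
      intro x hx
      simp only [Set.mem_iUnion, Finset.mem_insert, Set.mem_union, Set.mem_inter_iff,
        exists_prop] at hx ⊢
      obtain ⟨i, hi, j, hj, hij, hx1, hx2⟩ := hx
      rcases hi with rfl | hi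
      · rcases hj with rfl | hj
        · exact absurd rfl hij
        · exact Or.inl ⟨hx1, ⟨j, hj, hx2⟩⟩
      · rcases hj with rfl | hj
        · exact Or.inl ⟨hx2, ⟨i, hi, hx1⟩⟩
        · exact Or.inr ⟨i, hi, j, hj, hij, hx1, hx2⟩
    calc μ (⋃ i ∈ insert a s, S i) + μ (⋃ i ∈ insert a s, ⋃ j ∈ insert a s, ⋃ _ : i ≠ j, S i ∩ S j)
        ≤ μ (S a ∪ ⋃ i ∈ s, S i) + (μ (S a ∩ ⋃ i ∈ s, S i)
            + μ (⋃ i ∈ s, ⋃ j ∈ s, ⋃ _ : i ≠ j, S i ∩ S j)) := by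
          rw [Finset.set_biUnion_insert]
          exact add_le_add le_rfl ((measure_mono hP).trans (measure_union_le _ _))
      _ = (μ (S a ∪ ⋃ i ∈ s, S i) + μ (S a ∩ ⋃ i ∈ s, S i))
            + μ (⋃ i ∈ s, ⋃ j ∈ s, ⋃ _ : i ≠ j, S i ∩ S j) := by rw [add_assoc]
      _ ≤ (μ (S a) + μ (⋃ i ∈ s, S i)) + μ (⋃ i ∈ s, ⋃ j ∈ s, ⋃ _ : i ≠ j, S i ∩ S j) :=
          add_le_add (measure_submodular μ _ _) le_rfl
      _ ≤ μ (S a) + ∑ i ∈ s, μ (S i) := by rw [add_assoc]; exact add_le_add le_rfl ih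
      _ = ∑ i ∈ insert a s, μ (S i) := (Finset.sum_insert ha (f := fun i => μ (S i))).symm

lemma lemC {α ι : Type*} [MeasurableSpace α] (μ : Measure α) (s : Finset ι)
    (A : Set α) (Q : ι → Set α) (hQ : ∀ i, MeasurableSet (Q i))
    (hd : ∀ i j, i ≠ j → Disjoint (Q i) (Q j)) :
    ∑ i ∈ s, μ (A ∩ Q i) ≤ μ A := by
  classical
  induction s using Finset.induction_on generalizing A with
  | empty => simp
  | @insert a s ha ih =>
    rw [Finset.sum_insert ha]
    have h1 : ∑ i ∈ s, μ (A ∩ Q i) ≤ μ (A \ Q a) := by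
      refine le_trans (Finset.sum_le_sum fun i hi => ?_) (ih (A \ Q a))
      refine measure_mono fun x hx => ⟨⟨hx.1, ?_⟩, hx.2⟩
      intro hxa
      exact (hd i a (fun h => ha (h ▸ hi)) ).le_bot ⟨hx.2, hxa⟩
    calc μ (A ∩ Q a) + ∑ i ∈ s, μ (A ∩ Q i) ≤ μ (A ∩ Q a) + μ (A \ Q a) := add_le_add le_rfl h1
      _ = μ A := measure_inter_add_diff A (hQ a)

lemma inner2 (x y : E2) : (inner ℝ x y : ℝ) = x 0 * y 0 + x 1 * y 1 := by
  simp [PiLp.inner_apply, Fin.sum_univ_two, RCLike.inner_apply]; ring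

lemma normsq2 (x : E2) : ‖x‖^2 = x 0^2 + x 1^2 := by
  rw [← real_inner_self_eq_norm_sq, inner2]; ring

lemma step1 (E : Set E2) (x0 ν τ : E2) (r0 β ρ : ℝ) (hr0 : 0 < r0) (hβ : β ≤ r0/32)
    (hν : ‖ν‖ = 1) (hτ : ‖τ‖ = 1) (hortho : (inner ℝ τ ν : ℝ) = 0)
    (hsepc : ∀ C : Set E2, IsConnected C → C ⊆ ball x0 r0 \ E →
      ¬ ((∃ p ∈ C, β < (inner ℝ (p - x0) ν : ℝ)) ∧ (∃ q ∈ C, (inner ℝ (q - x0) ν : ℝ) < -β)))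
    (hρ : ρ ∈ Ioo (r0/16) r0) :
    ∃ p ∈ E, dist p x0 = ρ ∧ 0 < (inner ℝ (p - x0) τ : ℝ) := by
  have hρpos : 0 < ρ := lt_trans (by positivity) hρ.1
  by_contra hcon
  push_neg at hcon
  set g : ℝ → E2 := fun θ => x0 + (ρ * Real.cos θ) • τ + (ρ * Real.sin θ) • ν with hg
  have hsub : ∀ θ, g θ - x0 = (ρ * Real.cos θ) • τ + (ρ * Real.sin θ) • ν := by
    intro θ; rw [hg]; simp only [add_assoc, add_sub_cancel_left]
  have hνν : (inner ℝ ν ν : ℝ) = 1 := by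
    rw [real_inner_self_eq_norm_sq, hν]; norm_num
  have hττ : (inner ℝ τ τ : ℝ) = 1 := by
    rw [real_inner_self_eq_norm_sq, hτ]; norm_num
  have hortho' : (inner ℝ ν τ : ℝ) = 0 := by rw [real_inner_comm]; exact hortho
  have hgν : ∀ θ, (inner ℝ (g θ - x0) ν : ℝ) = ρ * Real.sin θ := by
    intro θ
    rw [hsub, inner_add_left, real_inner_smul_left, real_inner_smul_left, hortho, hνν]
    ring
  have hgτ : ∀ θ, (inner ℝ (g θ - x0) τ : ℝ) = ρ * Real.cos θ := by
    intro θ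
    rw [hsub, inner_add_left, real_inner_smul_left, real_inner_smul_left, hortho', hττ]
    ring
  have hdist : ∀ θ, dist (g θ) x0 = ρ := by
    intro θ
    have hsq : ‖g θ - x0‖^2 = ρ^2 := by
      rw [hsub, norm_add_sq_real, real_inner_smul_left, real_inner_smul_right, hortho,
        norm_smul, norm_smul, hτ, hν]
      simp only [Real.norm_eq_abs, mul_one, mul_zero]
      have h1 := Real.sin_sq_add_cos_sq θ
      nlinarith [sq_abs (ρ * Real.cos θ), sq_abs (ρ * Real.sin θ)]
    rw [dist_eq_norm, ← Real.sqrt_sq (norm_nonneg (g θ - x0)), hsq, Real.sqrt_sq hρpos.le]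
  have hcont : Continuous g := by fun_prop
  have hπ := Real.pi_pos
  have hconn : IsConnected (g '' Ioo (-(Real.pi/2)) (Real.pi/2)) :=
    (isConnected_Ioo (by linarith)).image g hcont.continuousOn
  have hCsub : g '' Ioo (-(Real.pi/2)) (Real.pi/2) ⊆ ball x0 r0 \ E := by
    rintro _ ⟨θ, hθ, rfl⟩
    constructor
    · rw [mem_ball, hdist]; exact hρ.2
    · intro hin
      have h1 := hcon _ hin (hdist θ)
      rw [hgτ] at h1
      have h2 : 0 < Real.cos θ := Real.cos_pos_of_mem_Ioo hθ
      nlinarith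
  have hsqrt2 : (1:ℝ) < Real.sqrt 2 := by
    nlinarith [Real.sq_sqrt (by norm_num : (0:ℝ) ≤ 2), Real.sqrt_nonneg 2]
  have hbig : β < ρ * (Real.sqrt 2 / 2) := by
    have h1 : r0/32 < ρ/2 := by linarith [hρ.1]
    nlinarith
  refine hsepc _ hconn hCsub ⟨⟨g (Real.pi/4), ⟨Real.pi/4, ⟨by linarith, by linarith⟩, rfl⟩, ?_⟩,
    ⟨g (-(Real.pi/4)), ⟨-(Real.pi/4), ⟨by linarith, by linarith⟩, rfl⟩, ?_⟩⟩
  · rw [hgν, Real.sin_pi_div_four]; exact hbig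
  · rw [hgν, Real.sin_neg, Real.sin_pi_div_four]
    have : (inner ℝ (g (Real.pi/4) - x0) ν : ℝ) = ρ * (Real.sqrt 2 / 2) := by
      rw [hgν, Real.sin_pi_div_four]
    nlinarith

lemma coarea_two (x0 : E2) (r0 : ℝ) (A : Set E2) (hA : A ⊆ ball x0 r0)
    (hcov : ∀ t ∈ Ioo (r0/16) r0, ∃ p ∈ A, dist p x0 = t) :
    volume (Ioo (r0/16) r0) +
      volume {t | t ∈ Ioo (r0/16) r0 ∧ ∃ p ∈ A, ∃ q ∈ A, p ≠ q ∧ dist p x0 = t ∧ dist q x0 = t}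
      ≤ μH[1] A := by
  classical
  set I := Ioo (r0/16) r0 with hI
  set D := {t | t ∈ I ∧ ∃ p ∈ A, ∃ q ∈ A, p ≠ q ∧ dist p x0 = t ∧ dist q x0 = t} with hDdef
  set Dm : ℕ → Set ℝ := fun m =>
    {t | t ∈ I ∧ ∃ p ∈ A, ∃ q ∈ A, 1/(m+1 : ℝ) ≤ dist p q ∧ dist p x0 = t ∧ dist q x0 = t}
    with hDm
  have hmono : Monotone Dm := by
    rintro m m' hmm t ⟨ht, p, hp, q, hq, hd, h1, h2⟩
    refine ⟨ht, p, hp, q, hq, le_trans ?_ hd, h1, h2⟩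
    gcongr

  have hDsub : D ⊆ ⋃ m, Dm m := by
    rintro t ⟨ht, p, hp, q, hq, hpq, h1, h2⟩
    have hpos : 0 < dist p q := dist_pos.mpr hpq
    obtain ⟨m, hm⟩ := exists_nat_one_div_lt hpos
    exact Set.mem_iUnion.2 ⟨m, ht, p, hp, q, hq, le_of_lt hm, h1, h2⟩
  have hsup : volume D ≤ ⨆ m, volume (Dm m) := by
    rw [← (hmono.directed_le).measure_iUnion]
    exact measure_mono hDsub
  have key : ∀ m : ℕ, volume I + volume (Dm m) ≤ μH[1] A := by
    intro m
    have hm1 : (0:ℝ) < m + 1 := by positivity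
    set c : ℝ := 1 / (2 * (m + 1)) with hcdef
    have hc0 : 0 < c := by positivity
    set Q : ℤ × ℤ → Set E2 := fun i =>
      {p : E2 | p 0 ∈ Ico ((i.1 : ℝ) * c) ((i.1 : ℝ) * c + c)
        ∧ p 1 ∈ Ico ((i.2 : ℝ) * c) ((i.2 : ℝ) * c + c)} with hQdef
    have hQm : ∀ i, MeasurableSet (Q i) := by
      intro i
      have h0 : Continuous fun p : E2 => p 0 := (EuclideanSpace.proj (0 : Fin 2)).continuous
      have h1 : Continuous fun p : E2 => p 1 := (EuclideanSpace.proj (1 : Fin 2)).continuous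
      exact (h0.measurable measurableSet_Ico).inter (h1.measurable measurableSet_Ico)
    -- membership in own cell
    have hfl : ∀ x : ℝ, (⌊x / c⌋ : ℝ) * c ≤ x ∧ x < (⌊x / c⌋ : ℝ) * c + c := by
      intro x
      constructor
      · have h1 : (⌊x / c⌋ : ℝ) ≤ x / c := Int.floor_le _
        calc (⌊x / c⌋ : ℝ) * c ≤ (x / c) * c := by gcongr
          _ = x := div_mul_cancel₀ x hc0.ne'
      · have h2 : x / c < ⌊x / c⌋ + 1 := Int.lt_floor_add_one _
        calc x = (x / c) * c := (div_mul_cancel₀ x hc0.ne').symm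
          _ < ((⌊x / c⌋ : ℝ) + 1) * c := by gcongr
          _ = (⌊x / c⌋ : ℝ) * c + c := by ring
    have hmem : ∀ p : E2, p ∈ Q (⌊p 0 / c⌋, ⌊p 1 / c⌋) :=
      fun p => ⟨⟨(hfl (p 0)).1, (hfl (p 0)).2⟩, ⟨(hfl (p 1)).1, (hfl (p 1)).2⟩⟩
    -- finite index set
    set R : ℝ := |x0 0| + |x0 1| + r0 with hR
    set M : ℤ := ⌈R / c⌉ + 1 with hM
    have hidx : ∀ x : ℝ, |x| ≤ R → ⌊x / c⌋ ∈ Finset.Icc (-M) M := by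
      intro x hx
      rw [Finset.mem_Icc]
      obtain ⟨hx1, hx2⟩ := abs_le.mp hx
      constructor
      · have hd : (-R)/c ≤ x / c := by gcongr
        have h := Int.floor_mono hd
        have h2 : -(⌈R/c⌉) ≤ ⌊(-R)/c⌋ := by
          rw [neg_div, Int.floor_neg]
        omega
      · have hd : x / c ≤ R / c := by gcongr
        have h := Int.floor_mono hd
        have h2 : ⌊R/c⌋ ≤ ⌈R/c⌉ := Int.floor_le_ceil _
        omega
    set s : Finset (ℤ × ℤ) := Finset.Icc (-M, -M) (M, M) with hs
    have hcoord : ∀ (p : E2) (j : Fin 2), |p j - x0 j| ≤ dist p x0 := by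
      intro p j
      rw [EuclideanSpace.dist_eq]
      have h1 : |p j - x0 j| = Real.sqrt (dist (p j) (x0 j) ^ 2) := by
        rw [Real.sqrt_sq dist_nonneg, Real.dist_eq]
      rw [h1]
      apply Real.sqrt_le_sqrt
      exact Finset.single_le_sum (f := fun i => dist (p i) (x0 i) ^ 2)
        (fun i _ => sq_nonneg _) (Finset.mem_univ j)
    have hsmem : ∀ p ∈ A, (⌊p 0 / c⌋, ⌊p 1 / c⌋) ∈ s := by
      intro p hp
      have hb : dist p x0 < r0 := mem_ball.mp (hA hp)
      have habs : ∀ j : Fin 2, |p j| ≤ |x0 j| + r0 := by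
        intro j
        have h1 := hcoord p j
        have h2 : |p j| - |x0 j| ≤ |p j - x0 j| := abs_sub_abs_le_abs_sub _ _
        linarith
      have h0 : |p 0| ≤ R := by have := habs 0; have := abs_nonneg (x0 1); rw [hR]; linarith
      have h1 : |p 1| ≤ R := by have := habs 1; have := abs_nonneg (x0 0); rw [hR]; linarith
      rw [hs, Finset.mem_Icc]
      constructor
      · exact Prod.mk_le_mk.mpr ⟨(Finset.mem_Icc.mp (hidx _ h0)).1,
          (Finset.mem_Icc.mp (hidx _ h1)).1⟩
      · exact Prod.mk_le_mk.mpr ⟨(Finset.mem_Icc.mp (hidx _ h0)).2,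
          (Finset.mem_Icc.mp (hidx _ h1)).2⟩
    have hdisj : ∀ i j : ℤ × ℤ, i ≠ j → Disjoint (Q i) (Q j) := by
      intro i j hij
      rw [Set.disjoint_left]
      intro p hpi hpj
      apply hij
      have key : ∀ a b : ℤ, (a:ℝ)*c ≤ p 0 → p 0 < (a:ℝ)*c + c → (b:ℝ)*c ≤ p 0 →
          p 0 < (b:ℝ)*c + c → a = b := by
        intro a b h1 h2 h3 h4
        have e1 : (a:ℝ)*c < ((b:ℝ)+1)*c := by nlinarith
        have e2 : (b:ℝ)*c < ((a:ℝ)+1)*c := by nlinarith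
        have f1 : (a:ℝ) < (b:ℝ)+1 := lt_of_mul_lt_mul_right e1 hc0.le
        have f2 : (b:ℝ) < (a:ℝ)+1 := lt_of_mul_lt_mul_right e2 hc0.le
        have g1 : a < b + 1 := by exact_mod_cast f1
        have g2 : b < a + 1 := by exact_mod_cast f2
        omega
      have key1 : ∀ a b : ℤ, (a:ℝ)*c ≤ p 1 → p 1 < (a:ℝ)*c + c → (b:ℝ)*c ≤ p 1 →
          p 1 < (b:ℝ)*c + c → a = b := by
        intro a b h1 h2 h3 h4
        have e1 : (a:ℝ)*c < ((b:ℝ)+1)*c := by nlinarith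
        have e2 : (b:ℝ)*c < ((a:ℝ)+1)*c := by nlinarith
        have f1 : (a:ℝ) < (b:ℝ)+1 := lt_of_mul_lt_mul_right e1 hc0.le
        have f2 : (b:ℝ) < (a:ℝ)+1 := lt_of_mul_lt_mul_right e2 hc0.le
        have g1 : a < b + 1 := by exact_mod_cast f1
        have g2 : b < a + 1 := by exact_mod_cast f2
        omega
      exact Prod.ext (key i.1 j.1 hpi.1.1 hpi.1.2 hpj.1.1 hpj.1.2)
        (key1 i.2 j.2 hpi.2.1 hpi.2.2 hpj.2.1 hpj.2.2)
    have hdiam : ∀ (i : ℤ × ℤ) (p q : E2), p ∈ Q i → q ∈ Q i → dist p q < 1/(m+1 : ℝ) := by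
      intro i p q hp hq
      have h0 : |p 0 - q 0| < c := by
        rw [abs_sub_lt_iff]
        constructor <;> [linarith [hp.1.1, hp.1.2, hq.1.1, hq.1.2];
          linarith [hp.1.1, hp.1.2, hq.1.1, hq.1.2]]
      have h1 : |p 1 - q 1| < c := by
        rw [abs_sub_lt_iff]
        constructor <;> [linarith [hp.2.1, hp.2.2, hq.2.1, hq.2.2];
          linarith [hp.2.1, hp.2.2, hq.2.1, hq.2.2]]
      rw [EuclideanSpace.dist_eq]
      have hsum : ∑ j : Fin 2, dist (p j) (q j) ^ 2 = dist (p 0) (q 0)^2 + dist (p 1) (q 1)^2 :=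
        Fin.sum_univ_two _
      have h2 : ∑ j : Fin 2, dist (p j) (q j) ^ 2 < 2 * c^2 := by
        rw [hsum, Real.dist_eq, Real.dist_eq]
        have := abs_nonneg (p 0 - q 0); have := abs_nonneg (p 1 - q 1)
        nlinarith [sq_abs (p 0 - q 0), sq_abs (p 1 - q 1)]
      have h3 : 2 * c^2 ≤ (1/(m+1 : ℝ))^2 := by
        rw [hcdef, div_pow, div_pow, one_pow, mul_one_div,
          div_le_div_iff₀ (by positivity) (by positivity)]
        nlinarith [sq_nonneg ((m:ℝ)+1)]
      calc Real.sqrt (∑ j : Fin 2, dist (p j) (q j) ^ 2) < Real.sqrt (2 * c^2) := by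
            apply (Real.sqrt_lt_sqrt (by positivity) h2)
        _ ≤ Real.sqrt ((1/(m+1:ℝ))^2) := Real.sqrt_le_sqrt h3
        _ = 1/(m+1:ℝ) := Real.sqrt_sq (by positivity)
    set S : ℤ × ℤ → Set ℝ := fun i => (fun p : E2 => dist p x0) '' (A ∩ Q i) with hS
    have hIsub : I ⊆ ⋃ i ∈ s, S i := by
      intro t ht
      obtain ⟨p, hp, hpt⟩ := hcov t ht
      exact Set.mem_biUnion (hsmem p hp) ⟨p, ⟨hp, hmem p⟩, hpt⟩
    have hDmsub : Dm m ⊆ ⋃ i ∈ s, ⋃ j ∈ s, ⋃ _ : i ≠ j, S i ∩ S j := by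
      rintro t ⟨ht, p, hp, q, hq, hdpq, hpt, hqt⟩
      have hij : (⌊p 0 / c⌋, ⌊p 1 / c⌋) ≠ (⌊q 0 / c⌋, ⌊q 1 / c⌋) := by
        intro h
        have := hdiam _ p q (hmem p) (h ▸ hmem q)
        linarith
      refine Set.mem_biUnion (hsmem p hp) ?_
      refine Set.mem_biUnion (hsmem q hq) ?_
      exact Set.mem_iUnion.2 ⟨hij, ⟨p, ⟨hp, hmem p⟩, hpt⟩, ⟨q, ⟨hq, hmem q⟩, hqt⟩⟩
    have hSle : ∀ i, volume (S i) ≤ μH[1] (A ∩ Q i) := by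
      intro i
      have h := (LipschitzWith.dist_left x0).hausdorffMeasure_image_le
        (zero_le_one) (A ∩ Q i)
      rw [← MeasureTheory.hausdorffMeasure_real]
      simpa using h
    calc volume I + volume (Dm m)
        ≤ volume (⋃ i ∈ s, S i) + volume (⋃ i ∈ s, ⋃ j ∈ s, ⋃ _ : i ≠ j, S i ∩ S j) :=
          add_le_add (measure_mono hIsub) (measure_mono hDmsub)
      _ ≤ ∑ i ∈ s, volume (S i) := lemB _ s S
      _ ≤ ∑ i ∈ s, μH[1] (A ∩ Q i) := Finset.sum_le_sum fun i _ => hSle i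
      _ ≤ μH[1] A := lemC _ s A Q hQm hdisj
  calc volume I + volume D ≤ volume I + ⨆ m, volume (Dm m) := add_le_add le_rfl hsup
    _ = ⨆ m, (volume I + volume (Dm m)) := by rw [ENNReal.add_iSup]
    _ ≤ μH[1] A := iSup_le key

/-- Intersection with circles: a flat separating set of length at most `(2 + 1/8) r0` meets
most circles `∂B(x0,ρ)`, `ρ ∈ (r0/16, r0)`, in exactly two points at distance larger than `ρ`. -/
theorem two_points_on_circles (E : Set E2) (x0 : E2) (r0 : ℝ)
    (hr0 : 0 < r0) (hE : RelClosedIn E (ball x0 r0)) (hx0 : x0 ∈ E)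
    (hflat : flatness E x0 r0 ≤ 1 / 32)
    (hsep : Separates E x0 r0)
    (hlen : μH[1] E ≤ ENNReal.ofReal ((2 + 1 / 8) * r0)) :
    ∃ Ξ : Set ℝ, MeasurableSet Ξ ∧ Ξ ⊆ Ioo (r0 / 16) r0 ∧
      volume (Ioo (r0 / 16) r0 \ Ξ) ≤ ENNReal.ofReal (r0 / 4) ∧
      ∀ ρ ∈ Ξ, ∃ p q : E2, p ≠ q ∧ E ∩ sphere x0 ρ = {p, q} ∧ ρ < dist p q := by
  classical
  obtain ⟨-, ν, hν, hstrip, hsepc⟩ := hsep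
  set β : ℝ := flatness E x0 r0 * r0 with hβdef
  have hβ : β ≤ r0/32 := by
    have := mul_le_mul_of_nonneg_right hflat hr0.le
    rw [hβdef]; linarith
  have hβ0 : 0 ≤ β := by
    have h := hstrip x0 ⟨hx0, mem_ball_self hr0⟩
    have : |(inner ℝ (x0 - x0) ν : ℝ)| = 0 := by simp
    rw [this] at h; exact h
  -- the orthogonal direction
  set τ : E2 := (WithLp.equiv 2 (Fin 2 → ℝ)).symm ![-ν 1, ν 0] with hτdef
  have hτ0 : τ 0 = -ν 1 := rfl
  have hτ1 : τ 1 = ν 0 := rfl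
  have hν2 : ν 0^2 + ν 1^2 = 1 := by
    have h := normsq2 ν; rw [hν] at h; rw [← h]; norm_num
  have hτ : ‖τ‖ = 1 := by
    have h : ‖τ‖^2 = 1 := by rw [normsq2, hτ0, hτ1]; nlinarith
    rw [← Real.sqrt_sq (norm_nonneg τ), h, Real.sqrt_one]
  have hortho : (inner ℝ τ ν : ℝ) = 0 := by rw [inner2, hτ0, hτ1]; ring
  have hkey : ∀ p : E2, (inner ℝ p ν : ℝ)^2 + (inner ℝ p τ : ℝ)^2 = ‖p‖^2 := by
    intro p
    rw [inner2, inner2, hτ0, hτ1, normsq2]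
    linear_combination (p 0 ^ 2 + p 1 ^ 2) * hν2
  set I := Ioo (r0/16) r0 with hI
  -- points of E on the circles lie far out on the two sides
  have hside : ∀ p ∈ E, ∀ ρ : ℝ, ρ ∈ I → dist p x0 = ρ → ρ/2 < |(inner ℝ (p - x0) τ : ℝ)| := by
    intro p hp ρ hρ hd
    have hρpos : 0 < ρ := lt_trans (by positivity) hρ.1
    have hball : p ∈ ball x0 r0 := by rw [mem_ball, hd]; exact hρ.2
    have h1 := hstrip p ⟨hp, hball⟩
    have h2 := hkey (p - x0)
    have h3 : ‖p - x0‖ = ρ := by rw [← dist_eq_norm]; exact hd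
    rw [h3] at h2
    have h4 : β < ρ/2 := by linarith [hρ.1]
    nlinarith [sq_abs ((inner ℝ (p - x0) ν : ℝ)), sq_abs ((inner ℝ (p - x0) τ : ℝ)),
      abs_nonneg ((inner ℝ (p - x0) ν : ℝ)), abs_nonneg ((inner ℝ (p - x0) τ : ℝ))]
  -- the two halves
  set Epos : Set E2 := {p | p ∈ E ∧ 0 < (inner ℝ (p - x0) τ : ℝ)} with hEpos
  set Eneg : Set E2 := {p | p ∈ E ∧ (inner ℝ (p - x0) τ : ℝ) < 0} with hEneg
  have hcovP : ∀ t ∈ I, ∃ p ∈ Epos, dist p x0 = t := by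
    intro t ht
    obtain ⟨p, hpE, hd, hpos⟩ := step1 E x0 ν τ r0 β t hr0 hβ hν hτ hortho hsepc ht
    exact ⟨p, ⟨hpE, hpos⟩, hd⟩
  have hcovN : ∀ t ∈ I, ∃ p ∈ Eneg, dist p x0 = t := by
    intro t ht
    have hτ' : ‖-τ‖ = 1 := by rw [norm_neg]; exact hτ
    have hortho' : (inner ℝ (-τ) ν : ℝ) = 0 := by rw [inner_neg_left, hortho]; ring
    obtain ⟨p, hpE, hd, hpos⟩ := step1 E x0 ν (-τ) r0 β t hr0 hβ hν hτ' hortho' hsepc ht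
    rw [inner_neg_right] at hpos
    exact ⟨p, ⟨hpE, by linarith⟩, hd⟩
  have hEball : E ⊆ ball x0 r0 := hE.1
  have c2P := coarea_two x0 r0 Epos (fun p hp => hEball hp.1) hcovP
  have c2N := coarea_two x0 r0 Eneg (fun p hp => hEball hp.1) hcovN
  set DP := {t | t ∈ I ∧ ∃ p ∈ Epos, ∃ q ∈ Epos, p ≠ q ∧ dist p x0 = t ∧ dist q x0 = t} with hDP
  set DN := {t | t ∈ I ∧ ∃ p ∈ Eneg, ∃ q ∈ Eneg, p ≠ q ∧ dist p x0 = t ∧ dist q x0 = t} with hDN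
  -- split the Hausdorff measure of E
  have hHmeas : MeasurableSet {p : E2 | 0 < (inner ℝ (p - x0) τ : ℝ)} := by
    have hf : Continuous fun p : E2 => (inner ℝ (p - x0) τ : ℝ) :=
      (continuous_id.sub continuous_const).inner continuous_const
    exact (isOpen_lt continuous_const hf).measurableSet
  have hsplit : μH[1] Epos + μH[1] Eneg ≤ μH[1] (E : Set E2) := by
    have h1 : μH[1] (E ∩ {p : E2 | 0 < (inner ℝ (p - x0) τ : ℝ)})
        + μH[1] (E \ {p : E2 | 0 < (inner ℝ (p - x0) τ : ℝ)}) = μH[1] (E : Set E2) :=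
      measure_inter_add_diff E hHmeas
    have h2 : Epos ⊆ E ∩ {p : E2 | 0 < (inner ℝ (p - x0) τ : ℝ)} := fun p hp => ⟨hp.1, hp.2⟩
    have h3 : Eneg ⊆ E \ {p : E2 | 0 < (inner ℝ (p - x0) τ : ℝ)} :=
      fun p hp => ⟨hp.1, by simp only [mem_setOf_eq, not_lt]; linarith [hp.2]⟩
    calc μH[1] Epos + μH[1] Eneg
        ≤ μH[1] (E ∩ {p : E2 | 0 < (inner ℝ (p - x0) τ : ℝ)})
          + μH[1] (E \ {p : E2 | 0 < (inner ℝ (p - x0) τ : ℝ)}) :=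
          add_le_add (measure_mono h2) (measure_mono h3)
      _ = μH[1] (E : Set E2) := h1
  -- arithmetic: the bad radii have small measure
  have hvolI : volume I = ENNReal.ofReal (r0 - r0/16) := Real.volume_Ioo
  have hDPN : volume DP + volume DN ≤ ENNReal.ofReal (r0/4) := by
    have hch : ENNReal.ofReal ((2 - 1/8) * r0) + (volume DP + volume DN)
        ≤ ENNReal.ofReal ((2 + 1/8) * r0) := by
      calc ENNReal.ofReal ((2 - 1/8) * r0) + (volume DP + volume DN)
          = (volume I + volume DP) + (volume I + volume DN) := by
            rw [hvolI, show ((2:ℝ) - 1/8) * r0 = (r0 - r0/16) + (r0 - r0/16) by ring,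
              ENNReal.ofReal_add (by linarith) (by linarith), add_add_add_comm]
        _ ≤ μH[1] Epos + μH[1] Eneg := add_le_add c2P c2N
        _ ≤ μH[1] (E : Set E2) := hsplit
        _ ≤ ENNReal.ofReal ((2 + 1/8) * r0) := hlen
    have h2 : volume DP + volume DN
        ≤ ENNReal.ofReal ((2 + 1/8) * r0) - ENNReal.ofReal ((2 - 1/8) * r0) :=
      ENNReal.le_sub_of_add_le_left (by exact ENNReal.ofReal_ne_top) hch
    rwa [← ENNReal.ofReal_sub _ (by linarith),
      show ((2:ℝ) + 1/8) * r0 - (2 - 1/8) * r0 = r0/4 by ring] at h2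
  -- define Ξ
  set T := toMeasurable volume (DP ∪ DN) with hT
  refine ⟨I \ T, measurableSet_Ioo.diff (measurableSet_toMeasurable _ _), diff_subset, ?_, ?_⟩
  · have h1 : I \ (I \ T) ⊆ T := fun x hx => by
      by_contra hxT; exact hx.2 ⟨hx.1, hxT⟩
    calc volume (I \ (I \ T)) ≤ volume T := measure_mono h1
      _ = volume (DP ∪ DN) := measure_toMeasurable _
      _ ≤ volume DP + volume DN := measure_union_le _ _
      _ ≤ ENNReal.ofReal (r0/4) := hDPN
  · rintro ρ ⟨hρI, hρT⟩
    have hρ0 : 0 < ρ := lt_trans (by positivity) hρI.1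
    have hρB : ρ ∉ DP ∪ DN := fun h => hρT (subset_toMeasurable _ _ h)
    obtain ⟨p, hpP, hpd⟩ := hcovP ρ hρI
    obtain ⟨q, hqN, hqd⟩ := hcovN ρ hρI
    have hpq : p ≠ q := by
      intro h
      rw [h] at hpP
      linarith [hpP.2, hqN.2]
    refine ⟨p, q, hpq, ?_, ?_⟩
    · ext r
      simp only [mem_inter_iff, mem_insert_iff, mem_singleton_iff]
      constructor
      · rintro ⟨hrE, hrS⟩
        have hrd : dist r x0 = ρ := mem_sphere.mp hrS
        have hτr := hside r hrE ρ hρI hrd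
        rcases lt_trichotomy ((inner ℝ (r - x0) τ : ℝ)) 0 with hneg | hzero | hpos
        · right
          by_contra hne
          exact hρB (Or.inr ⟨hρI, r, ⟨hrE, hneg⟩, q, hqN, hne, hrd, hqd⟩)
        · rw [hzero] at hτr; simp at hτr; linarith
        · left
          by_contra hne
          exact hρB (Or.inl ⟨hρI, r, ⟨hrE, hpos⟩, p, hpP, hne, hrd, hpd⟩)
      · rintro (rfl | rfl)
        · exact ⟨hpP.1, mem_sphere.mpr hpd⟩
        · exact ⟨hqN.1, mem_sphere.mpr hqd⟩
    · have hap := hside p hpP.1 ρ hρI hpd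
      have haq := hside q hqN.1 ρ hρI hqd
      rw [abs_of_pos hpP.2] at hap
      rw [abs_of_neg hqN.2] at haq
      have hsplit2 : (inner ℝ (p - q) τ : ℝ)
          = (inner ℝ (p - x0) τ : ℝ) - (inner ℝ (q - x0) τ : ℝ) := by
        rw [show p - q = (p - x0) - (q - x0) by abel, inner_sub_left]
      have hbound : |(inner ℝ (p - q) τ : ℝ)| ≤ dist p q := by
        calc |(inner ℝ (p - q) τ : ℝ)| ≤ ‖p - q‖ * ‖τ‖ := abs_real_inner_le_norm _ _
          _ = dist p q := by rw [hτ, mul_one, dist_eq_norm]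
      rw [hsplit2] at hbound
      have := le_abs_self ((inner ℝ (p - x0) τ : ℝ) - (inner ℝ (q - x0) τ : ℝ))
      linarith
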